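/- Let ℓ be a positive integer, f a real-valued function on B_ℓ, and λ > 0. Let f′ be the function on B_ℓ equal to f(x) when |f(x)| > λ and equal to 0 otherwise, let A_{2λ} = {x ∈ B_ℓ : M(f)(x) > 2λ}, and write |A_{2λ}| for 2^{−ℓ} times the number of elements of A_{2λ}. Then λ · |A_{2λ}| ≤ ‖f′‖_1. -/
import Mathlib


open Finset

/-- The value `±1 ∈ ℝ` attached to a coordinate of a point of `B_ℓ = {−1,1}^ℓ`,
modelled as `Fin ℓ → Bool`.  `sgn (x j)` is the Rademacher function at `x`. -/
def sgn (b : Bool) : ℝ := if b then 1 else -1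

/-- `E_k(f)(x) = 2^{−ℓ+k} Σ_{y ∈ N_k(x)} f(y)`, the average of `f` over
`N_k(x) = {y ∈ B_ℓ : y_j = x_j for all j ≤ k}` (indices `0,…,k−1` in `Fin ℓ`). -/
noncomputable def condExpB (ℓ k : ℕ) (f : (Fin ℓ → Bool) → ℝ) (x : Fin ℓ → Bool) : ℝ :=
  (2:ℝ) ^ ((k:ℤ) - (ℓ:ℤ)) *
    ∑ y ∈ Finset.univ.filter (fun y : Fin ℓ → Bool => ∀ j : Fin ℓ, (j:ℕ) < k → y j = x j), f y


/-- The dyadic martingale maximal function `M(f)(x) = max_{0 ≤ k ≤ ℓ} |E_k(f)(x)|`. -/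
noncomputable def maxFn (ℓ : ℕ) (f : (Fin ℓ → Bool) → ℝ) (x : Fin ℓ → Bool) : ℝ :=
  (Finset.range (ℓ + 1)).sup' (Finset.nonempty_range_iff.mpr (Nat.succ_ne_zero ℓ))
    (fun k => |condExpB ℓ k f x|)


lemma Nset_card (ℓ k : ℕ) (hk : k ≤ ℓ) (x : Fin ℓ → Bool) :
    (univ.filter (fun y : Fin ℓ → Bool => ∀ j : Fin ℓ, (j:ℕ) < k → y j = x j)).card
      = 2 ^ (ℓ - k) := by
  classical
  have h : (univ.filter (fun y : Fin ℓ → Bool => ∀ j : Fin ℓ, (j:ℕ) < k → y j = x j))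
      = Fintype.piFinset (fun j : Fin ℓ => if (j:ℕ) < k then {x j} else Finset.univ) := by
    ext y
    simp only [mem_filter, mem_univ, true_and, Fintype.mem_piFinset]
    constructor
    · intro h j
      by_cases hj : (j:ℕ) < k
      · simp [hj, h j hj]
      · simp [hj]
    · intro h j hj
      have := h j
      simpa [hj] using this
  rw [h, Fintype.card_piFinset]
  have : ∀ j : Fin ℓ, (if (j:ℕ) < k then ({x j} : Finset Bool) else Finset.univ).card
      = if (j:ℕ) < k then 1 else 2 := by
    intro j; by_cases hj : (j:ℕ) < k <;> simp [hj]
  rw [Finset.prod_congr rfl (fun j _ => this j), Finset.prod_ite, Finset.prod_const,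
    Finset.prod_const, one_pow, one_mul]
  congr 1
  have : (univ.filter (fun j : Fin ℓ => ¬ (j:ℕ) < k)).card
      = ℓ - (univ.filter (fun j : Fin ℓ => (j:ℕ) < k)).card := by
    rw [Finset.filter_not, Finset.card_sdiff_of_subset (Finset.filter_subset _ _)]
    simp
  rw [this]
  congr 1
  have himg : (univ.filter (fun j : Fin ℓ => (j:ℕ) < k)).image Fin.val = Finset.range k := by
    ext n
    simp only [Finset.mem_image, mem_filter, mem_univ, true_and, Finset.mem_range]
    constructor
    · rintro ⟨j, hj, rfl⟩; exact hj
    · intro hn; exact ⟨⟨n, lt_of_lt_of_le hn hk⟩, hn, rfl⟩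
  have := Finset.card_image_of_injective
    (univ.filter (fun j : Fin ℓ => (j:ℕ) < k)) (Fin.val_injective)
  rw [← this, himg, Finset.card_range]

lemma condExpB_congr (ℓ k : ℕ) (f : (Fin ℓ → Bool) → ℝ) {x y : Fin ℓ → Bool}
    (h : ∀ j : Fin ℓ, (j:ℕ) < k → y j = x j) :
    condExpB ℓ k f y = condExpB ℓ k f x := by
  unfold condExpB
  congr 2
  ext z
  simp only [mem_filter, mem_univ, true_and]
  constructor
  · intro hz j hj; rw [hz j hj, h j hj]
  · intro hz j hj; rw [hz j hj, ← h j hj]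

lemma abs_condExpB_le_avg (ℓ k : ℕ) (f : (Fin ℓ → Bool) → ℝ) (x : Fin ℓ → Bool) :
    |condExpB ℓ k f x| ≤ (2:ℝ) ^ ((k:ℤ) - (ℓ:ℤ)) *
      ∑ y ∈ univ.filter (fun y : Fin ℓ → Bool => ∀ j : Fin ℓ, (j:ℕ) < k → y j = x j), |f y| := by
  unfold condExpB
  rw [abs_mul, abs_of_pos (by positivity)]
  gcongr
  exact Finset.abs_sum_le_sum_abs _ _

lemma two_zpow_cancel (ℓ k : ℕ) (hk : k ≤ ℓ) :
    (2:ℝ) ^ ((k:ℤ) - (ℓ:ℤ)) * ((2:ℕ) ^ (ℓ - k) : ℕ) = 1 := by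
  have : (((2:ℕ) ^ (ℓ - k) : ℕ) : ℝ) = (2:ℝ) ^ (((ℓ:ℤ)) - (k:ℤ)) := by
    push_cast
    rw [← zpow_natCast]
    congr 1
    omega
  rw [this, ← zpow_add₀ (by norm_num : (2:ℝ) ≠ 0)]
  norm_num

lemma abs_condExpB_le (ℓ k : ℕ) (hk : k ≤ ℓ) (f : (Fin ℓ → Bool) → ℝ) (x : Fin ℓ → Bool)
    (c : ℝ) (hc : 0 ≤ c) (hf : ∀ z, |f z| ≤ c) :
    |condExpB ℓ k f x| ≤ c := by
  refine (abs_condExpB_le_avg ℓ k f x).trans ?_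
  have hsum : ∑ y ∈ univ.filter (fun y : Fin ℓ → Bool => ∀ j : Fin ℓ, (j:ℕ) < k → y j = x j), |f y|
      ≤ ((2:ℕ) ^ (ℓ - k) : ℕ) * c := by
    calc _ ≤ ∑ _y ∈ univ.filter (fun y : Fin ℓ → Bool => ∀ j : Fin ℓ, (j:ℕ) < k → y j = x j), c :=
          Finset.sum_le_sum (fun y _ => hf y)
      _ = ((2:ℕ) ^ (ℓ - k) : ℕ) * c := by rw [Finset.sum_const, Nset_card ℓ k hk x]; simp
  calc (2:ℝ) ^ ((k:ℤ) - (ℓ:ℤ)) *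
      ∑ y ∈ univ.filter (fun y : Fin ℓ → Bool => ∀ j : Fin ℓ, (j:ℕ) < k → y j = x j), |f y|
      ≤ (2:ℝ) ^ ((k:ℤ) - (ℓ:ℤ)) * (((2:ℕ) ^ (ℓ - k) : ℕ) * c) :=
        mul_le_mul_of_nonneg_left hsum (by positivity)
    _ = ((2:ℝ) ^ ((k:ℤ) - (ℓ:ℤ)) * ((2:ℕ) ^ (ℓ - k) : ℕ)) * c := by ring
    _ = c := by rw [two_zpow_cancel ℓ k hk, one_mul]

lemma condExpB_add (ℓ k : ℕ) (f g : (Fin ℓ → Bool) → ℝ) (x : Fin ℓ → Bool) :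
    condExpB ℓ k (fun y => f y + g y) x = condExpB ℓ k f x + condExpB ℓ k g x := by
  unfold condExpB
  rw [Finset.sum_add_distrib, mul_add]

lemma le_maxFn (ℓ k : ℕ) (hk : k ≤ ℓ) (f : (Fin ℓ → Bool) → ℝ) (x : Fin ℓ → Bool) :
    |condExpB ℓ k f x| ≤ maxFn ℓ f x :=
  Finset.le_sup' (fun k => |condExpB ℓ k f x|) (Finset.mem_range.mpr (Nat.lt_succ_of_le hk))

lemma lt_maxFn_iff (ℓ : ℕ) (f : (Fin ℓ → Bool) → ℝ) (x : Fin ℓ → Bool) (c : ℝ) :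
    c < maxFn ℓ f x ↔ ∃ k, k ≤ ℓ ∧ c < |condExpB ℓ k f x| := by
  unfold maxFn
  rw [Finset.lt_sup'_iff]
  simp [Nat.lt_succ_iff]

lemma weak11 (ℓ : ℕ) (g : (Fin ℓ → Bool) → ℝ) (lam : ℝ) (hlam : 0 < lam) :
    lam * ((univ.filter (fun x : Fin ℓ → Bool => lam < maxFn ℓ g x)).card : ℝ)
      ≤ ∑ y : Fin ℓ → Bool, |g y| := by
  classical
  set A := univ.filter (fun x : Fin ℓ → Bool => lam < maxFn ℓ g x) with hA
  set κ : (Fin ℓ → Bool) → ℕ := fun x => sInf {k | lam < |condExpB ℓ k g x|} with hκ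
  have hκ_spec : ∀ x, lam < maxFn ℓ g x →
      κ x ≤ ℓ ∧ lam < |condExpB ℓ (κ x) g x| ∧ ∀ j < κ x, ¬ lam < |condExpB ℓ j g x| := by
    intro x hx
    obtain ⟨k, hkℓ, hk⟩ := (lt_maxFn_iff ℓ g x lam).mp hx
    have hne : {k | lam < |condExpB ℓ k g x|}.Nonempty := ⟨k, hk⟩
    exact ⟨le_trans (Nat.sInf_le hk) hkℓ, Nat.sInf_mem hne,
      fun j hj => Nat.notMem_of_lt_sInf hj⟩
  have transfer : ∀ x y, lam < maxFn ℓ g x → (∀ j : Fin ℓ, (j:ℕ) < κ x → y j = x j) →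
      lam < maxFn ℓ g y ∧ κ y = κ x := by
    intro x y hx hagree
    obtain ⟨hκℓ, hκlt, hκmin⟩ := hκ_spec x hx
    have heq : ∀ j, j ≤ κ x → condExpB ℓ j g y = condExpB ℓ j g x := by
      intro j hj
      exact condExpB_congr ℓ j g (fun i hi => hagree i (lt_of_lt_of_le hi hj))
    have hy : lam < |condExpB ℓ (κ x) g y| := by rw [heq _ le_rfl]; exact hκlt
    have hymax : lam < maxFn ℓ g y := (lt_maxFn_iff ℓ g y lam).mpr ⟨κ x, hκℓ, hy⟩
    refine ⟨hymax, ?_⟩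
    have h1 : κ y ≤ κ x := Nat.sInf_le hy
    rcases lt_or_eq_of_le h1 with h | h
    · exfalso
      have hmem : κ y ∈ {k | lam < |condExpB ℓ k g y|} := Nat.sInf_mem ⟨κ x, hy⟩
      have hmem' : lam < |condExpB ℓ (κ y) g y| := hmem
      rw [heq _ (le_of_lt h)] at hmem'
      exact hκmin _ h hmem'
    · exact h
  have key : ∀ y : Fin ℓ → Bool,
      (∑ x ∈ A, if (∀ j : Fin ℓ, (j:ℕ) < κ x → y j = x j)
        then (2:ℝ) ^ ((κ x:ℤ) - (ℓ:ℤ)) * |g y| else 0) ≤ |g y| := by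
    intro y
    by_cases hy : lam < maxFn ℓ g y
    · obtain ⟨hκyℓ, -, -⟩ := hκ_spec y hy
      have step : ∀ x ∈ A, (if (∀ j : Fin ℓ, (j:ℕ) < κ x → y j = x j)
          then (2:ℝ) ^ ((κ x:ℤ) - (ℓ:ℤ)) * |g y| else 0)
          ≤ (if (∀ j : Fin ℓ, (j:ℕ) < κ y → x j = y j)
          then (2:ℝ) ^ ((κ y:ℤ) - (ℓ:ℤ)) * |g y| else 0) := by
        intro x hxA
        have hx : lam < maxFn ℓ g x := (mem_filter.mp hxA).2
        by_cases hc : ∀ j : Fin ℓ, (j:ℕ) < κ x → y j = x j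
        · have hk := (transfer x y hx hc).2
          have hc' : ∀ j : Fin ℓ, (j:ℕ) < κ y → x j = y j := by
            intro j hj; rw [hk] at hj; exact (hc j hj).symm
          rw [if_pos hc, if_pos hc', hk]
        · simp only [hc, if_false]
          positivity
      calc (∑ x ∈ A, if (∀ j : Fin ℓ, (j:ℕ) < κ x → y j = x j)
            then (2:ℝ) ^ ((κ x:ℤ) - (ℓ:ℤ)) * |g y| else 0)
          ≤ ∑ x ∈ A, (if (∀ j : Fin ℓ, (j:ℕ) < κ y → x j = y j)
            then (2:ℝ) ^ ((κ y:ℤ) - (ℓ:ℤ)) * |g y| else 0) := Finset.sum_le_sum step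
        _ ≤ ∑ x : Fin ℓ → Bool, (if (∀ j : Fin ℓ, (j:ℕ) < κ y → x j = y j)
            then (2:ℝ) ^ ((κ y:ℤ) - (ℓ:ℤ)) * |g y| else 0) :=
            Finset.sum_le_sum_of_subset_of_nonneg (Finset.filter_subset _ _)
              (fun x _ _ => by positivity)
        _ = ∑ x ∈ univ.filter (fun x : Fin ℓ → Bool => ∀ j : Fin ℓ, (j:ℕ) < κ y → x j = y j),
            (2:ℝ) ^ ((κ y:ℤ) - (ℓ:ℤ)) * |g y| := (Finset.sum_filter _ _).symm
        _ = ((2:ℕ) ^ (ℓ - κ y) : ℕ) * ((2:ℝ) ^ ((κ y:ℤ) - (ℓ:ℤ)) * |g y|) := by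
            rw [Finset.sum_const, Nset_card ℓ (κ y) hκyℓ y, nsmul_eq_mul]
            try ring
        _ = ((2:ℝ) ^ ((κ y:ℤ) - (ℓ:ℤ)) * ((2:ℕ) ^ (ℓ - κ y) : ℕ)) * |g y| := by ring
        _ = |g y| := by rw [two_zpow_cancel ℓ (κ y) hκyℓ, one_mul]
    · have hz : ∀ x ∈ A, (if (∀ j : Fin ℓ, (j:ℕ) < κ x → y j = x j)
          then (2:ℝ) ^ ((κ x:ℤ) - (ℓ:ℤ)) * |g y| else 0) = 0 := by
        intro x hxA
        have hx : lam < maxFn ℓ g x := (mem_filter.mp hxA).2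
        by_cases hc : ∀ j : Fin ℓ, (j:ℕ) < κ x → y j = x j
        · exact absurd (transfer x y hx hc).1 hy
        · simp [hc]
      rw [Finset.sum_congr rfl hz, Finset.sum_const_zero]
      positivity
  calc lam * (A.card : ℝ) = ∑ _x ∈ A, lam := by
        rw [Finset.sum_const, nsmul_eq_mul, mul_comm]
    _ ≤ ∑ x ∈ A, (2:ℝ) ^ ((κ x:ℤ) - (ℓ:ℤ)) *
        ∑ y ∈ univ.filter (fun y : Fin ℓ → Bool => ∀ j : Fin ℓ, (j:ℕ) < κ x → y j = x j), |g y| := by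
        refine Finset.sum_le_sum (fun x hxA => ?_)
        have hx : lam < maxFn ℓ g x := (mem_filter.mp hxA).2
        exact ((hκ_spec x hx).2.1.le).trans (abs_condExpB_le_avg ℓ (κ x) g x)
    _ = ∑ x ∈ A, ∑ y : Fin ℓ → Bool, (if (∀ j : Fin ℓ, (j:ℕ) < κ x → y j = x j)
        then (2:ℝ) ^ ((κ x:ℤ) - (ℓ:ℤ)) * |g y| else 0) := by
        refine Finset.sum_congr rfl (fun x _ => ?_)
        rw [Finset.mul_sum, Finset.sum_filter]
    _ = ∑ y : Fin ℓ → Bool, ∑ x ∈ A, (if (∀ j : Fin ℓ, (j:ℕ) < κ x → y j = x j)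
        then (2:ℝ) ^ ((κ x:ℤ) - (ℓ:ℤ)) * |g y| else 0) := Finset.sum_comm
    _ ≤ ∑ y : Fin ℓ → Bool, |g y| := Finset.sum_le_sum (fun y _ => key y)

/-- with `f′(x) = f(x)` when `|f(x)| > λ` and `f′(x) = 0` otherwise, and
`A_{2λ} = {x ∈ B_ℓ : M(f)(x) > 2λ}` with `|A_{2λ}| = 2^{−ℓ} #A_{2λ}`, one has
`λ ⬝ |A_{2λ}| ≤ ‖f′‖_1 = 2^{−ℓ} Σ_x |f′(x)|`. -/
theorem stmt15 (ℓ : ℕ) (hℓ : 0 < ℓ) (f : (Fin ℓ → Bool) → ℝ) (lam : ℝ) (hlam : 0 < lam) :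
    lam * ((2:ℝ) ^ (-(ℓ:ℤ)) * Nat.card {x : Fin ℓ → Bool // 2 * lam < maxFn ℓ f x})
      ≤ (2:ℝ) ^ (-(ℓ:ℤ)) *
        ∑ x : Fin ℓ → Bool, |if lam < |f x| then f x else 0| := by
  classical
  set g : (Fin ℓ → Bool) → ℝ := fun x => if lam < |f x| then f x else 0 with hg
  set h : (Fin ℓ → Bool) → ℝ := fun x => f x - g x with hh
  have hbd : ∀ z, |h z| ≤ lam := by
    intro z
    by_cases hz : lam < |f z|
    · simp only [hh, hg, hz, if_true, sub_self, abs_zero]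
      exact hlam.le
    · simp only [hh, hg, hz, if_false, sub_zero]
      exact le_of_not_gt hz
  have hc : (Nat.card {x : Fin ℓ → Bool // 2 * lam < maxFn ℓ f x} : ℝ)
      = ((univ.filter (fun x : Fin ℓ → Bool => 2 * lam < maxFn ℓ f x)).card : ℝ) := by
    rw [Nat.card_eq_fintype_card, Fintype.card_subtype]
  have hsub : (univ.filter (fun x : Fin ℓ → Bool => 2 * lam < maxFn ℓ f x))
      ⊆ (univ.filter (fun x : Fin ℓ → Bool => lam < maxFn ℓ g x)) := by
    intro x hx
    simp only [mem_filter, mem_univ, true_and] at hx ⊢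
    obtain ⟨k, hkℓ, hk⟩ := (lt_maxFn_iff ℓ f x (2 * lam)).mp hx
    have hdec : condExpB ℓ k f x = condExpB ℓ k g x + condExpB ℓ k h x := by
      rw [← condExpB_add]
      congr 1
      funext z
      simp [hh]
    have hEh : |condExpB ℓ k h x| ≤ lam := abs_condExpB_le ℓ k hkℓ h x lam hlam.le hbd
    have hlt : lam < |condExpB ℓ k g x| := by
      have habs : |condExpB ℓ k f x| ≤ |condExpB ℓ k g x| + |condExpB ℓ k h x| := by
        rw [hdec]; exact abs_add_le _ _
      linarith
    exact (lt_maxFn_iff ℓ g x lam).mpr ⟨k, hkℓ, hlt⟩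
  have hw := weak11 ℓ g lam hlam
  have hcard : ((univ.filter (fun x : Fin ℓ → Bool => 2 * lam < maxFn ℓ f x)).card : ℝ)
      ≤ ((univ.filter (fun x : Fin ℓ → Bool => lam < maxFn ℓ g x)).card : ℝ) :=
    Nat.cast_le.mpr (Finset.card_le_card hsub)
  have hgoalrhs : ∑ x : Fin ℓ → Bool, |if lam < |f x| then f x else 0|
      = ∑ y : Fin ℓ → Bool, |g y| := rfl
  rw [hc, hgoalrhs]
  calc lam * ((2:ℝ) ^ (-(ℓ:ℤ)) *
        ((univ.filter (fun x : Fin ℓ → Bool => 2 * lam < maxFn ℓ f x)).card : ℝ))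
      = (2:ℝ) ^ (-(ℓ:ℤ)) * (lam *
        ((univ.filter (fun x : Fin ℓ → Bool => 2 * lam < maxFn ℓ f x)).card : ℝ)) := by ring
    _ ≤ (2:ℝ) ^ (-(ℓ:ℤ)) * (lam *
        ((univ.filter (fun x : Fin ℓ → Bool => lam < maxFn ℓ g x)).card : ℝ)) := by
        have h2 : (0:ℝ) ≤ (2:ℝ) ^ (-(ℓ:ℤ)) := by positivity
        exact mul_le_mul_of_nonneg_left (mul_le_mul_of_nonneg_left hcard hlam.le) h2
    _ ≤ (2:ℝ) ^ (-(ℓ:ℤ)) * ∑ y : Fin ℓ → Bool, |g y| := by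
        have h2 : (0:ℝ) ≤ (2:ℝ) ^ (-(ℓ:ℤ)) := by positivity
        exact mul_le_mul_of_nonneg_left hw h2
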